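/- Let H be a complex Hilbert space which is an L²-space over a σ-finite measure space, and let 𝒞 := {(φ, ψ) ∈ H × H : |φ| ≤ ψ a.e.}. Then the metric projection P : H × H → 𝒞 is given by P(φ, ψ) = (½[|φ| + |φ| ∧ Re ψ]⁺ · sgn φ, ½[|φ| ∨ Re ψ + Re ψ]⁺), where sgn φ(x) = φ(x)/|φ(x)| if φ(x) ≠ 0 and 0 otherwise, ∧ and ∨ are pointwise min and max, and [·]⁺ is the pointwise positive part. -/

import Mathlib

open MeasureTheory

private lemma real_key {r s t' u' : ℝ} (hr : 0 ≤ r) (ht' : 0 ≤ t') (htu : t' ≤ u') :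
    (r - (1/2) * max (r + min r s) 0)^2 + (s - (1/2) * max (max r s + s) 0)^2
      ≤ (r - t')^2 + (s - u')^2 := by
  have hu' : 0 ≤ u' := ht'.trans htu
  rcases le_total r s with h | h
  · rw [min_eq_left h, max_eq_right h, max_eq_left (by linarith), max_eq_left (by linarith)]
    nlinarith [sq_nonneg (r - t'), sq_nonneg (s - u')]
  · rw [min_eq_right h, max_eq_left h]
    rcases le_total 0 (r + s) with h2 | h2
    · rw [max_eq_left h2]
      nlinarith [mul_nonneg (by linarith : (0:ℝ) ≤ r - s) (by linarith : (0:ℝ) ≤ u' - t'),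
        sq_nonneg (t' - u'), sq_nonneg (t' + u' - r - s)]
    · rw [max_eq_right h2]
      nlinarith [mul_nonneg hu' (by linarith : (0:ℝ) ≤ -s - r),
        mul_nonneg hr (by linarith : (0:ℝ) ≤ u' - t'), sq_nonneg t', sq_nonneg u']

private lemma abs_proj (a : ℂ) (t : ℝ) (ht : 0 ≤ t)
    (ht0 : a = 0 → t = 0) :
    ‖a - (t : ℂ) * (a / ((‖a‖ : ℝ) : ℂ))‖ = |‖a‖ - t| := by
  rcases eq_or_ne a 0 with rfl | ha
  · simp [ht0 rfl]
  · have hr : (‖a‖ : ℝ) ≠ 0 := by simpa using ha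
    have hrc : ((‖a‖ : ℝ) : ℂ) ≠ 0 := by exact_mod_cast hr
    have : a - (t : ℂ) * (a / ((‖a‖ : ℝ) : ℂ))
        = (((‖a‖ - t : ℝ)) : ℂ) * (a / ((‖a‖ : ℝ) : ℂ)) := by
      field_simp
      push_cast; ring
    rw [this, norm_mul, norm_div, Complex.norm_real, Complex.norm_real, Real.norm_eq_abs, Real.norm_eq_abs,
      abs_of_nonneg (norm_nonneg a), div_self hr, mul_one]

private lemma scalar_key (a b f g : ℂ) (h1 : ‖f‖ ≤ g.re) (h2 : g.im = 0)
    (t u : ℝ)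
    (htd : t = (1 / 2 : ℝ) * max (‖a‖ + min (‖a‖) b.re) 0)
    (hud : u = (1 / 2 : ℝ) * max (max (‖a‖) b.re + b.re) 0) :
    ‖a - ((t : ℝ) : ℂ) * (a / ((‖a‖ : ℝ) : ℂ))‖ ^ 2
      + ‖b - ((u : ℝ) : ℂ)‖ ^ 2
      ≤ ‖a - f‖ ^ 2 + ‖b - g‖ ^ 2 := by
  have hr : 0 ≤ ‖a‖ := norm_nonneg a
  have ht : 0 ≤ t := htd ▸ mul_nonneg (by norm_num) (le_max_right _ _)
  have ht0 : a = 0 → t = 0 := by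
    intro ha
    subst ha
    rw [htd]
    simp only [norm_zero, zero_add]
    rw [max_eq_right (min_le_left 0 _), mul_zero]
  have h1' : ‖a - ((t : ℝ) : ℂ) * (a / ((‖a‖ : ℝ) : ℂ))‖
      = |‖a‖ - t| := abs_proj a t ht ht0
  have h2' : ‖b - ((u : ℝ) : ℂ)‖ ^ 2 = (b.re - u) ^ 2 + b.im ^ 2 := by
    rw [Complex.sq_norm, Complex.normSq_apply]
    simp
    ring
  have h3' : ‖b - g‖ ^ 2 = (b.re - g.re) ^ 2 + b.im ^ 2 := by
    rw [Complex.sq_norm, Complex.normSq_apply]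
    simp [h2]
    ring
  have h4' : (‖a‖ - ‖f‖) ^ 2 ≤ ‖a - f‖ ^ 2 := by
    have h5 : |‖a‖ - ‖f‖| ≤ ‖a - f‖ :=
      abs_norm_sub_norm_le a f
    calc (‖a‖ - ‖f‖) ^ 2 = |‖a‖ - ‖f‖| ^ 2 :=
          (sq_abs _).symm
      _ ≤ ‖a - f‖ ^ 2 := pow_le_pow_left₀ (abs_nonneg _) h5 2
  have key := real_key (r := ‖a‖) (s := b.re) (t' := ‖f‖) (u' := g.re)
      hr (norm_nonneg f) h1
  rw [← htd, ← hud] at key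
  rw [h1', h2', h3', sq_abs]
  linarith

private lemma norm_sq_int {X : Type*} [MeasurableSpace X] {μ : Measure X}
    (h : Lp ℂ 2 μ) : ‖h‖ ^ 2 = ∫ x, ‖h x‖ ^ 2 ∂μ := by
  rw [@norm_sq_eq_re_inner ℂ, MeasureTheory.L2.inner_def,
    ← integral_re (MeasureTheory.L2.integrable_inner h h)]
  congr 1
  ext x
  exact inner_self_eq_norm_sq (𝕜 := ℂ) (h x)

private lemma int_sq {X : Type*} [MeasurableSpace X] {μ : Measure X}
    (h : Lp ℂ 2 μ) : Integrable (fun x => ‖h x‖ ^ 2) μ := by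
  have := (MeasureTheory.L2.integrable_inner (𝕜 := ℂ) h h).re
  refine this.congr (Filter.Eventually.of_forall fun x => ?_)
  exact inner_self_eq_norm_sq (𝕜 := ℂ) (h x)

theorem stmt_10 {X : Type*} [MeasurableSpace X] (μ : Measure X) [SigmaFinite μ]
    (φ ψ φ' ψ' : Lp ℂ 2 μ)
    (hφ' : ∀ᵐ x ∂μ, φ' x =
      (((1 / 2 : ℝ) * max (‖φ x‖ + min (‖φ x‖) (ψ x).re) 0 : ℝ) : ℂ) *
        (φ x / ((‖φ x‖ : ℝ) : ℂ)))
    (hψ' : ∀ᵐ x ∂μ, ψ' x =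
      (((1 / 2 : ℝ) * max (max (‖φ x‖) (ψ x).re + (ψ x).re) 0 : ℝ) : ℂ)) :
    (∀ᵐ x ∂μ, ‖φ' x‖ ≤ (ψ' x).re ∧ (ψ' x).im = 0) ∧
      ∀ f g : Lp ℂ 2 μ,
        (∀ᵐ x ∂μ, ‖f x‖ ≤ (g x).re ∧ (g x).im = 0) →
        ‖φ - φ'‖ ^ 2 + ‖ψ - ψ'‖ ^ 2 ≤ ‖φ - f‖ ^ 2 + ‖ψ - g‖ ^ 2 := by
  constructor
  · filter_upwards [hφ', hψ'] with x h1 h2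
    refine ⟨?_, by simp [h2]⟩
    rw [h1, h2]
    set r := ‖φ x‖ with hrdef
    set s := (ψ x).re
    have hr : 0 ≤ r := norm_nonneg _
    have ht : 0 ≤ (1 / 2 : ℝ) * max (r + min r s) 0 :=
      mul_nonneg (by norm_num) (le_max_right _ _)
    have htu : (1 / 2 : ℝ) * max (r + min r s) 0 ≤ (1 / 2 : ℝ) * max (max r s + s) 0 := by
      apply mul_le_mul_of_nonneg_left _ (by norm_num)
      apply max_le_max _ le_rfl
      rcases le_total r s with h | h
      · rw [min_eq_left h, max_eq_right h]; linarith
      · rw [min_eq_right h, max_eq_left h]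
    simp only [Complex.ofReal_re, Complex.norm_mul, Complex.norm_real, Real.norm_eq_abs, abs_of_nonneg ht]
    calc (1 / 2 : ℝ) * max (r + min r s) 0 * ‖φ x / ((r : ℝ) : ℂ)‖
        ≤ (1 / 2 : ℝ) * max (r + min r s) 0 * 1 := by
          apply mul_le_mul_of_nonneg_left _ ht
          rw [norm_div, Complex.norm_real, Real.norm_eq_abs, abs_of_nonneg hr, ← hrdef]
          rcases eq_or_ne r 0 with h | h
          · simp [h]
          · rw [div_self h]
      _ = (1 / 2 : ℝ) * max (r + min r s) 0 := mul_one _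
      _ ≤ (1 / 2 : ℝ) * max (max r s + s) 0 := htu
  · intro f g hfg
    rw [norm_sq_int (φ - φ'), norm_sq_int (ψ - ψ'), norm_sq_int (φ - f), norm_sq_int (ψ - g),
      ← integral_add (int_sq _) (int_sq _), ← integral_add (int_sq _) (int_sq _)]
    apply integral_mono_ae ((int_sq _).add (int_sq _)) ((int_sq _).add (int_sq _))
    filter_upwards [hφ', hψ', hfg, Lp.coeFn_sub φ φ', Lp.coeFn_sub ψ ψ',
      Lp.coeFn_sub φ f, Lp.coeFn_sub ψ g] with x h1 h2 h3 e1 e2 e3 e4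
    simp only [Pi.add_apply, e1, e2, e3, e4, Pi.sub_apply]
    rw [h1, h2]
    exact scalar_key (φ x) (ψ x) (f x) (g x) h3.1 h3.2 _ _ rfl rfl
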